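/- Let a_1, …, a_l ≥ 2 be integers with continuants p_l, p_{l−1}, q_l, q_{l−1} and r_l = p_l − q_l, and let b_1, …, b_m ≥ 2 be integers whose continuant numerator equals p_l and whose continuant denominator equals r_l. Then the sequence (a_1, …, a_l, b_m, b_{m−1}, …, b_1) has continuant numerator p_l² − p_l p_{l−1} + p_{l−1}² and continuant denominator p_l q_l − p_l q_{l−1} + p_{l−1} q_{l−1}. -/
import Mathlib


/-- Continuant numerators `p_j` of `[c_1, c_2, …]⁻`:
`p_0 = 1`, `p_1 = c_1`, `p_j = c_j p_{j-1} - p_{j-2}`. -/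
def contP (c : ℕ → ℤ) : ℕ → ℤ
  | 0 => 1
  | 1 => c 1
  | (j + 2) => c (j + 2) * contP c (j + 1) - contP c j

/-- Continuant denominators `q_j` of `[c_1, c_2, …]⁻`:
`q_0 = 0`, `q_1 = 1`, `q_j = c_j q_{j-1} - q_{j-2}`. -/
def contQ (c : ℕ → ℤ) : ℕ → ℤ
  | 0 => 0
  | 1 => 1
  | (j + 2) => c (j + 2) * contQ c (j + 1) - contQ c j

lemma cont_congr (c c' : ℕ → ℤ) : ∀ n, (∀ i, 1 ≤ i → i ≤ n → c i = c' i) →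
    contP c n = contP c' n ∧ contQ c n = contQ c' n
  | 0, _ => by simp [contP, contQ]
  | 1, h => by simp [contP, contQ, h 1 le_rfl le_rfl]
  | (n+2), h => by
      obtain ⟨h1P, h1Q⟩ := cont_congr c c' (n+1) (fun i hi hin => h i hi (by omega))
      obtain ⟨h0P, h0Q⟩ := cont_congr c c' n (fun i hi hin => h i hi (by omega))
      simp [contP, contQ, h (n+2) (by omega) le_rfl, h1P, h1Q, h0P, h0Q]

lemma cont_prepend (f g : ℕ → ℤ) (x : ℤ) (h1 : g 1 = x)
    (hs : ∀ i, 1 ≤ i → g (i+1) = f i) :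
    ∀ n, contP g (n+1) = x * contP f n - contQ f n ∧ contQ g (n+1) = contP f n
  | 0 => by simp [contP, contQ, h1]
  | 1 => by
      have h2 := hs 1 le_rfl
      constructor
      · show g 2 * contP g 1 - contP g 0 = _
        simp [contP, contQ, h1, h2]; ring
      · show g 2 * contQ g 1 - contQ g 0 = _
        simp [contP, contQ, h2]
  | (n+2) => by
      obtain ⟨hP1, hQ1⟩ := cont_prepend f g x h1 hs (n+1)
      obtain ⟨hP0, hQ0⟩ := cont_prepend f g x h1 hs n
      have h2 := hs (n+2) (by omega)
      have eP : contP g (n+3) = g (n+3) * contP g (n+2) - contP g (n+1) := by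
        show contP g ((n+1)+2) = _; rw [contP]
      have eQ : contQ g (n+3) = g (n+3) * contQ g (n+2) - contQ g (n+1) := by
        show contQ g ((n+1)+2) = _; rw [contQ]
      have fP : contP f (n+2) = f (n+2) * contP f (n+1) - contP f n := by rw [contP]
      have fQ : contQ f (n+2) = f (n+2) * contQ f (n+1) - contQ f n := by rw [contQ]
      constructor
      · rw [eP, hP1, hP0, h2, fP, fQ]; ring
      · rw [eQ, hQ1, hQ0, h2, fP]

lemma cont_reverse (e : ℕ → ℤ) : ∀ m, 1 ≤ m →
    contP (fun i => e (m+1-i)) m = contP e m ∧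
    contP (fun i => e (m+1-i)) (m-1) = contQ e m ∧
    contQ (fun i => e (m+1-i)) m = contP e (m-1) ∧
    contQ (fun i => e (m+1-i)) (m-1) = contQ e (m-1)
  | 1, _ => by
      refine ⟨?_, ?_, ?_, ?_⟩ <;> simp [contP, contQ]
  | (m'+2), _ => by
      set m := m'+1 with hm
      obtain ⟨IH1, IH2, IH3, IH4⟩ := cont_reverse e m (by omega)
      set f : ℕ → ℤ := fun i => e (m+1-i) with hf
      set g : ℕ → ℤ := fun i => e (m+2-i) with hg
      have h1 : g 1 = e (m+1) := by simp [hg]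
      have hs : ∀ i, 1 ≤ i → g (i+1) = f i := by
        intro i _; simp only [hg, hf]; try (congr 1; try omega)
      obtain ⟨pm, qm⟩ := cont_prepend f g (e (m+1)) h1 hs m
      obtain ⟨pm1, qm1⟩ := cont_prepend f g (e (m+1)) h1 hs (m'.succ - 1)
      have hmm : m'.succ - 1 + 1 = m := by omega
      rw [hmm] at pm1 qm1
      have eP : contP e (m+1) = e (m+1) * contP e m - contP e m' := by
        show contP e (m'+2) = _ ; rw [contP]
      have eQ : contQ e (m+1) = e (m+1) * contQ e m - contQ e m' := by
        show contQ e (m'+2) = _ ; rw [contQ]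
      have hgoal : (fun i => e (m'+2+1-i)) = g := by
        funext i; simp only [hg]; try (congr 1; try omega)
      refine ⟨?_, ?_, ?_, ?_⟩
      · show contP (fun i => e (m'+2+1-i)) (m+1) = contP e (m+1)
        rw [hgoal, pm, eP, IH1, IH3]
        simp only [hm, Nat.add_sub_cancel]
      · show contP (fun i => e (m'+2+1-i)) m = contQ e (m+1)
        rw [hgoal, pm1, eQ, IH2, IH4]
        simp only [hm, Nat.add_sub_cancel]
      · show contQ (fun i => e (m'+2+1-i)) (m+1) = contP e m
        rw [hgoal, qm, IH1]
      · show contQ (fun i => e (m'+2+1-i)) m = contQ e m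
        rw [hgoal, qm1, IH2]

lemma cont_concat (c d : ℕ → ℤ) (l : ℕ) (hl : 1 ≤ l)
    (hd : ∀ i, 1 ≤ i → c (l+i) = d i) :
    ∀ k, contP c (l+k) = contP c l * contP d k - contP c (l-1) * contQ d k ∧
         contQ c (l+k) = contQ c l * contP d k - contQ c (l-1) * contQ d k
  | 0 => by simp [contP, contQ]
  | 1 => by
      obtain ⟨l', rfl⟩ : ∃ l', l = l'+1 := ⟨l-1, by omega⟩
      have h1 := hd 1 le_rfl
      have eP : contP c (l'+1+1) = c (l'+2) * contP c (l'+1) - contP c l' := by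
        rw [show l'+1+1 = l'+2 from rfl, contP]
      have eQ : contQ c (l'+1+1) = c (l'+2) * contQ c (l'+1) - contQ c l' := by
        rw [show l'+1+1 = l'+2 from rfl, contQ]
      rw [eP, eQ]
      simp only [Nat.add_sub_cancel, contP, contQ]
      rw [show l'+1+1 = l'+2 from rfl] at h1
      rw [h1]; constructor <;> ring
  | (k+2) => by
      obtain ⟨hP1, hQ1⟩ := cont_concat c d l hl hd (k+1)
      obtain ⟨hP0, hQ0⟩ := cont_concat c d l hl hd k
      have h2 := hd (k+2) (by omega)
      have eP : contP c (l+(k+2)) = c (l+(k+2)) * contP c (l+(k+1)) - contP c (l+k) := by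
        show contP c ((l+k)+2) = _
        rw [contP]; rfl
      have eQ : contQ c (l+(k+2)) = c (l+(k+2)) * contQ c (l+(k+1)) - contQ c (l+k) := by
        show contQ c ((l+k)+2) = _
        rw [contQ]; rfl
      have fP : contP d (k+2) = d (k+2) * contP d (k+1) - contP d k := by rw [contP]
      have fQ : contQ d (k+2) = d (k+2) * contQ d (k+1) - contQ d k := by rw [contQ]
      rw [eP, eQ, hP1, hP0, hQ1, hQ0, h2, fP, fQ]
      constructor <;> ring

lemma cont_growth (c : ℕ → ℤ) : ∀ n, (∀ i, 1 ≤ i → i ≤ n+1 → 2 ≤ c i) →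
    1 ≤ contP c n ∧ contP c n + 1 ≤ contP c (n+1)
  | 0, h => by
      have := h 1 le_rfl le_rfl
      constructor <;> simp [contP] <;> linarith
  | (n+1), h => by
      obtain ⟨h0, h1⟩ := cont_growth c n (fun i hi hin => h i hi (by omega))
      have hc := h (n+2) (by omega) le_rfl
      have e : contP c (n+1+1) = c (n+2) * contP c (n+1) - contP c n := by
        rw [show n+1+1 = n+2 from rfl, contP]
      constructor
      · linarith
      · rw [e]
        nlinarith [mul_nonneg (by linarith : (0:ℤ) ≤ c (n+2) - 2) (by linarith : (0:ℤ) ≤ contP c (n+1))]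

lemma cont_det (c : ℕ → ℤ) : ∀ n, contP c n * contQ c (n+1) - contP c (n+1) * contQ c n = 1
  | 0 => by simp [contP, contQ]
  | (n+1) => by
      have IH := cont_det c n
      have fP : contP c (n+1+1) = c (n+2) * contP c (n+1) - contP c n := by
        rw [show n+1+1 = n+2 from rfl, contP]
      have fQ : contQ c (n+1+1) = c (n+2) * contQ c (n+1) - contQ c n := by
        rw [show n+1+1 = n+2 from rfl, contQ]
      rw [fP, fQ]; linear_combination IH

/-- **Concatenation with the full reversal.** Let `a_1,…,a_l ≥ 2` have
continuants `p_l, p_{l-1}, q_l, q_{l-1}` and `r_l = p_l - q_l`, and let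
`b_1,…,b_m ≥ 2` satisfy `[b_1,…,b_m]⁻ = p_l / r_l`.  Then the sequence
`(a_1,…,a_l, b_m,…,b_1)` has continuant numerator
`p_l² - p_l p_{l-1} + p_{l-1}²` and denominator
`p_l q_l - p_l q_{l-1} + p_{l-1} q_{l-1}`. -/
theorem continuant_concat_reversal (l m : ℕ) (hl : 1 ≤ l) (hm : 1 ≤ m)
    (a b : ℕ → ℤ)
    (ha : ∀ i, 1 ≤ i → i ≤ l → 2 ≤ a i) (hb : ∀ i, 1 ≤ i → i ≤ m → 2 ≤ b i)
    (hnum : contP b m = contP a l)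
    (hden : contQ b m = contP a l - contQ a l)
    (c : ℕ → ℤ)
    (hc : c = fun i => if i ≤ l then a i else b (l + m + 1 - i)) :
    contP c (l + m) =
      contP a l ^ 2 - contP a l * contP a (l - 1) + contP a (l - 1) ^ 2 ∧
    contQ c (l + m) =
      contP a l * contQ a l - contP a l * contQ a (l - 1) +
        contP a (l - 1) * contQ a (l - 1) := by
  subst hc
  set c : ℕ → ℤ := fun i => if i ≤ l then a i else b (l + m + 1 - i) with hcdef
  set P := contP a l with hP
  set P' := contP a (l-1) with hP'
  set Q := contQ a l with hQ
  set Q' := contQ a (l-1) with hQ'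
  set p' := contP b (m-1) with hp'
  set q' := contQ b (m-1) with hq'
  -- agreement of c with a up to l
  have hagree : ∀ n, n ≤ l → contP c n = contP a n ∧ contQ c n = contQ a n := by
    intro n hn
    exact cont_congr c a n (fun i hi hin => by
      simp only [hcdef]; rw [if_pos (by omega)])
  obtain ⟨hcl, hcl'⟩ := hagree l le_rfl
  obtain ⟨hcl1, hcl1'⟩ := hagree (l-1) (by omega)
  -- d is the reversal of b
  set d : ℕ → ℤ := fun i => b (m+1-i) with hd
  have hcd : ∀ i, 1 ≤ i → c (l+i) = d i := by
    intro i hi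
    simp only [hcdef, hd]
    rw [if_neg (by omega)]
    congr 1; omega
  obtain ⟨hconcP, hconcQ⟩ := cont_concat c d l hl hcd m
  obtain ⟨hr1, hr2, hr3, hr4⟩ := cont_reverse b m hm
  -- growth bounds
  have hmm : m - 1 + 1 = m := by omega
  have hll : l - 1 + 1 = l := by omega
  obtain ⟨hgb1, hgb2⟩ := cont_growth b (m-1) (fun i hi hin => hb i hi (by omega))
  rw [hmm] at hgb2
  obtain ⟨hga1, hga2⟩ := cont_growth a (l-1) (fun i hi hin => ha i hi (by omega))
  rw [hll] at hga2
  -- determinant identities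
  have deta := cont_det a (l-1)
  rw [hll] at deta
  have detb := cont_det b (m-1)
  rw [hmm] at detb
  rw [hnum, hden] at detb
  -- detb : p' * (P - Q) - P * q' = 1
  -- deta : P' * Q - P * Q' = 1
  have hcop : IsCoprime P (P - Q) := ⟨-q', p', by linear_combination detb⟩
  have hdvd : P ∣ (p' - (P - P')) * (P - Q) :=
    ⟨q' - P + Q + P' - Q', by linear_combination detb - deta⟩
  have hdvd2 : P ∣ (p' - (P - P')) := hcop.dvd_of_dvd_mul_right hdvd
  have hkey : p' = P - P' := by
    have h0 : p' - (P - P') = 0 := by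
      refine Int.eq_zero_of_abs_lt_dvd hdvd2 ?_
      rw [abs_lt]; constructor <;> linarith
    linarith
  -- finish
  constructor
  · rw [hconcP, hcl, hcl1, hr1, hr3, hnum, ← hp', hkey]; ring
  · rw [hconcQ, hcl', hcl1', hr1, hr3, hnum, ← hp', hkey]; ring
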